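/- arXiv:1912.10577 — 2 statements merged into one kernel-verified Lean document; each statement's English description precedes it below -/
import Mathlib

section
/- Let X ~ N(μ₁, σ₁²) and Y ~ N(μ₂, σ₂²) with μ₁ ≥ μ₂ and σ₁ ≥ σ₂ ≥ 0. Then X is stochastically optimistic with respect to Y, i.e., E[u(X)] ≥ E[u(Y)] for every convex increasing u: ℝ → ℝ for which both expectations exist. -/
open MeasureTheory ProbabilityTheory

/-- `X` is stochastically optimistic with respect to `Y`: `E[u(X)] ≥ E[u(Y)]` for every
convex increasing `u : ℝ → ℝ` (for which the expectations exist). -/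
def StochasticallyOptimistic {Ω₁ Ω₂ : Type*} [MeasurableSpace Ω₁] [MeasurableSpace Ω₂]
    (P : Measure Ω₁) (Q : Measure Ω₂) (X : Ω₁ → ℝ) (Y : Ω₂ → ℝ) : Prop :=
  ∀ u : ℝ → ℝ, ConvexOn ℝ Set.univ u → Monotone u →
    Integrable (fun ω => u (X ω)) P → Integrable (fun ω => u (Y ω)) Q →
    ∫ ω, u (Y ω) ∂Q ≤ ∫ ω, u (X ω) ∂P

lemma convex_spread {u : ℝ → ℝ} (hu : ConvexOn ℝ Set.univ u) {a s t : ℝ}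
    (hs : 0 ≤ s) (hst : s ≤ t) :
    u (a + s) + u (a - s) ≤ u (a + t) + u (a - t) := by
  rcases eq_or_lt_of_le (hs.trans hst) with h | ht
  · obtain rfl : t = 0 := h.symm
    obtain rfl : s = 0 := le_antisymm hst hs
    simp
  · have ht2 : (0:ℝ) < 2 * t := by linarith
    have htne : t ≠ 0 := ne_of_gt ht
    set l := (t + s) / (2 * t) with hl
    have hl0 : 0 ≤ l := by positivity
    have hl1 : 1 - l = (t - s) / (2 * t) := by rw [hl]; field_simp; ring
    have hl1' : 0 ≤ 1 - l := by
      rw [hl1]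
      apply div_nonneg (by linarith) (by linarith)
    have e1 : l • (a + t) + (1 - l) • (a - t) = a + s := by
      simp only [smul_eq_mul]; rw [hl1, hl]; field_simp; ring
    have e2 : (1 - l) • (a + t) + l • (a - t) = a - s := by
      simp only [smul_eq_mul]; rw [hl1, hl]; field_simp; ring
    have h1 := hu.2 (Set.mem_univ (a + t)) (Set.mem_univ (a - t)) hl0 hl1' (by ring)
    rw [e1] at h1
    have h2 := hu.2 (Set.mem_univ (a + t)) (Set.mem_univ (a - t)) hl1' hl0 (by ring)
    rw [e2] at h2
    simp only [smul_eq_mul] at h1 h2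
    linarith

lemma pointwise_key {u : ℝ → ℝ} (hu : ConvexOn ℝ Set.univ u) (hm : Monotone u)
    {μ₁ μ₂ σ₁ σ₂ : ℝ} (hμ : μ₂ ≤ μ₁) (hσ₂ : 0 ≤ σ₂) (hσ : σ₂ ≤ σ₁) (z : ℝ) :
    u (σ₂ * z + μ₂) + u (σ₂ * (-z) + μ₂) ≤ u (σ₁ * z + μ₁) + u (σ₁ * (-z) + μ₁) := by
  have main : ∀ w : ℝ, 0 ≤ w →
      u (σ₂ * w + μ₂) + u (σ₂ * (-w) + μ₂) ≤ u (σ₁ * w + μ₁) + u (σ₁ * (-w) + μ₁) := by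
    intro w hw
    have m1 : u (σ₂ * w + μ₂) ≤ u (σ₂ * w + μ₂ + (μ₁ - μ₂)) := hm (by linarith)
    have m2 : u (σ₂ * (-w) + μ₂) ≤ u (σ₂ * (-w) + μ₂ + (μ₁ - μ₂)) := hm (by linarith)
    have hs : 0 ≤ σ₂ * w := mul_nonneg hσ₂ hw
    have hst : σ₂ * w ≤ σ₁ * w := mul_le_mul_of_nonneg_right hσ hw
    have hspread := convex_spread hu (a := μ₁) hs hst
    have e1 : σ₂ * w + μ₂ + (μ₁ - μ₂) = μ₁ + σ₂ * w := by ring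
    have e2 : σ₂ * (-w) + μ₂ + (μ₁ - μ₂) = μ₁ - σ₂ * w := by ring
    have e3 : σ₁ * w + μ₁ = μ₁ + σ₁ * w := by ring
    have e4 : σ₁ * (-w) + μ₁ = μ₁ - σ₁ * w := by ring
    rw [e1] at m1; rw [e2] at m2; rw [e3, e4]
    linarith
  rcases le_total 0 z with hz | hz
  · exact main z hz
  · have h := main (-z) (by linarith)
    rw [neg_neg] at h
    linarith

theorem gaussian_stochasticallyOptimistic (μ₁ μ₂ σ₁ σ₂ : ℝ)
    (hμ : μ₂ ≤ μ₁) (hσ₂ : 0 ≤ σ₂) (hσ : σ₂ ≤ σ₁) :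
    StochasticallyOptimistic
      (gaussianReal μ₁ ⟨σ₁ ^ 2, sq_nonneg σ₁⟩)
      (gaussianReal μ₂ ⟨σ₂ ^ 2, sq_nonneg σ₂⟩)
      (fun x => x) (fun x => x) := by
  intro u hconv hmono hX hY
  set γ := gaussianReal 0 1 with hγ
  have humeas : Measurable u := hmono.measurable
  have hmap : ∀ μ σ : ℝ, γ.map (fun z => σ * z + μ) = gaussianReal μ ⟨σ ^ 2, sq_nonneg σ⟩ := by
    intro μ σ
    have h1 : γ.map (fun z => σ * z) = gaussianReal 0 ⟨σ ^ 2, sq_nonneg σ⟩ := by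
      rw [hγ]
      rw [show (fun z : ℝ => σ * z) = (σ * ·) from rfl, gaussianReal_map_const_mul σ]
      simp
      rfl
    have hcomp : (fun z : ℝ => σ * z + μ) = (· + μ) ∘ (σ * ·) := rfl
    rw [hcomp, ← Measure.map_map (measurable_id'.add_const μ) (measurable_const_mul σ), h1]
    exact (gaussianReal_map_add_const (μ := 0) (v := ⟨σ ^ 2, sq_nonneg σ⟩) μ).trans
      (by congr 1; simp)
  have hint : ∀ μ σ : ℝ, Integrable u (gaussianReal μ ⟨σ ^ 2, sq_nonneg σ⟩) →
      Integrable (fun z => u (σ * z + μ)) γ := by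
    intro μ σ h
    rw [← hmap μ σ] at h
    exact (integrable_map_measure humeas.aestronglyMeasurable
      ((measurable_const_mul σ).add_const μ).aemeasurable).mp h
  have hInt : ∀ μ σ : ℝ, ∫ x, u x ∂(gaussianReal μ ⟨σ ^ 2, sq_nonneg σ⟩)
      = ∫ z, u (σ * z + μ) ∂γ := by
    intro μ σ
    rw [← hmap μ σ, integral_map ((measurable_const_mul σ).add_const μ).aemeasurable
      humeas.aestronglyMeasurable]
  have hneg : γ.map (fun z => -z) = γ := by
    have h := gaussianReal_map_const_mul (μ := 0) (v := 1) (-1)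
    have hv : (⟨(-1:ℝ) ^ 2, sq_nonneg _⟩ : NNReal) * 1 = 1 := by
      ext; norm_num
    simp only [neg_one_mul, mul_zero, hv] at h
    rw [hγ, h]; congr 1
  have hintneg : ∀ μ σ : ℝ, Integrable (fun z => u (σ * z + μ)) γ →
      Integrable (fun z => u (σ * (-z) + μ)) γ := by
    intro μ σ h
    have h' : Integrable (fun z => u (σ * z + μ)) (γ.map (fun z => -z)) := by rw [hneg]; exact h
    exact (integrable_map_measure (humeas.comp
      ((measurable_const_mul σ).add_const μ)).aestronglyMeasurable
      measurable_neg.aemeasurable).mp h'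
  have hInteq : ∀ μ σ : ℝ, ∫ z, u (σ * (-z) + μ) ∂γ = ∫ z, u (σ * z + μ) ∂γ := by
    intro μ σ
    have h := integral_map (φ := fun z : ℝ => -z) (μ := γ)
      measurable_neg.aemeasurable (f := fun x => u (σ * x + μ))
      (humeas.comp ((measurable_const_mul σ).add_const μ)).aestronglyMeasurable
    rw [hneg] at h
    exact h.symm
  have hX' : Integrable (fun z => u (σ₁ * z + μ₁)) γ := hint μ₁ σ₁ hX
  have hY' : Integrable (fun z => u (σ₂ * z + μ₂)) γ := hint μ₂ σ₂ hY
  have hX'' := hintneg μ₁ σ₁ hX'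
  have hY'' := hintneg μ₂ σ₂ hY'
  have key : ∫ z, (u (σ₂ * z + μ₂) + u (σ₂ * (-z) + μ₂)) ∂γ
      ≤ ∫ z, (u (σ₁ * z + μ₁) + u (σ₁ * (-z) + μ₁)) ∂γ :=
    integral_mono (hY'.add hY'') (hX'.add hX'')
      (fun z => pointwise_key hconv hmono hμ hσ₂ hσ z)
  rw [integral_add hY' hY'', integral_add hX' hX'', hInteq μ₁ σ₁, hInteq μ₂ σ₂] at key
  show ∫ x, u x ∂(gaussianReal μ₂ ⟨σ₂ ^ 2, sq_nonneg σ₂⟩)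
      ≤ ∫ x, u x ∂(gaussianReal μ₁ ⟨σ₁ ^ 2, sq_nonneg σ₁⟩)
  rw [hInt μ₂ σ₂, hInt μ₁ σ₁]
  linarith
end

section
/- Let X₁,...,Xₙ and Y₁,...,Yₙ be two collections, each of independent real random variables, with X_i ≥_SO Y_i for each i. Then for f(x₁,...,xₙ) = max_i x_i, we have f(X₁,...,Xₙ) ≥_SO f(Y₁,...,Yₙ). -/
open MeasureTheory ProbabilityTheory

namespace SOMaxAux

open Finset Filter

/-- abs of a `sup'` is at most the sum of the absolute values. -/
lemma abs_sup'_le {ι : Type*} (s : Finset ι) (hs : s.Nonempty) (f : ι → ℝ) :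
    |s.sup' hs f| ≤ ∑ i ∈ s, |f i| := by
  obtain ⟨i0, hi0⟩ := hs
  rw [abs_le]
  constructor
  · calc -(∑ i ∈ s, |f i|) ≤ -|f i0| := by
          exact neg_le_neg (Finset.single_le_sum (fun i _ => abs_nonneg (f i)) hi0)
      _ ≤ f i0 := neg_abs_le _
      _ ≤ s.sup' ⟨i0, hi0⟩ f := Finset.le_sup' f hi0
  · exact Finset.sup'_le _ _ fun i hi =>
      (le_abs_self _).trans (Finset.single_le_sum (fun j _ => abs_nonneg (f j)) hi)

lemma measurable_sup'_lambda {m : ℕ} {δ : Type*} [MeasurableSpace δ]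
    (f : Fin (m + 1) → δ → ℝ) (hf : ∀ i, Measurable (f i)) :
    Measurable fun x => Finset.univ.sup' Finset.univ_nonempty fun i => f i x := by
  have h := Finset.measurable_sup' (s := (Finset.univ : Finset (Fin (m + 1))))
      Finset.univ_nonempty (f := f) (fun i _ => hf i)
  have heq : (Finset.univ.sup' Finset.univ_nonempty f) =
      fun x => Finset.univ.sup' Finset.univ_nonempty fun i => f i x := by
    funext x
    exact Finset.sup'_apply _ _ _
  rwa [heq] at h

lemma measurable_supc {m : ℕ} (c : ℝ) :
    Measurable (fun x : Fin (m + 1) → ℝ =>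
      max (Finset.univ.sup' Finset.univ_nonempty fun i => x i) c) :=
  Measurable.max (measurable_sup'_lambda _ fun i => measurable_pi_apply i) measurable_const

lemma pi_map_eval {m : ℕ} (μ : Fin (m + 1) → Measure ℝ) [∀ i, IsProbabilityMeasure (μ i)]
    (j : Fin (m + 1)) : (Measure.pi μ).map (Function.eval j) = μ j := by
  ext s hs
  rw [Measure.map_apply (measurable_pi_apply j) hs]
  have hpre : Function.eval j ⁻¹' s =
      Set.pi Set.univ (Function.update (fun _ : Fin (m + 1) => (Set.univ : Set ℝ)) j s) := by
    ext x
    simp only [Set.mem_preimage, Function.eval, Set.mem_pi, Set.mem_univ, forall_true_left]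
    constructor
    · intro hx i
      rcases eq_or_ne i j with rfl | hij
      · simpa using hx
      · simp [Function.update_of_ne hij]
    · intro hx
      have := hx j
      simpa using this
  rw [hpre, Measure.pi_pi]
  rw [Finset.prod_eq_single j]
  · simp
  · intro i _ hij
    simp [Function.update_of_ne hij]
  · simp

lemma integrable_eval {m : ℕ} (μ : Fin (m + 1) → Measure ℝ) [∀ i, IsProbabilityMeasure (μ i)]
    {f : ℝ → ℝ} (hf : Measurable f) {j : Fin (m + 1)} (h : Integrable f (μ j)) :
    Integrable (fun x : Fin (m + 1) → ℝ => f (x j)) (Measure.pi μ) := by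
  have h' : Integrable f ((Measure.pi μ).map (Function.eval j)) := by
    rwa [pi_map_eval μ j]
  exact (integrable_map_measure hf.aestronglyMeasurable
    (measurable_pi_apply j).aemeasurable).mp h'

lemma abs_max_le_add (a b : ℝ) : |max a b| ≤ |a| + |b| :=
  abs_max_le_max_abs_abs.trans (max_le (le_add_of_nonneg_right (abs_nonneg _))
    (le_add_of_nonneg_left (abs_nonneg _)))

lemma integrable_supc_pi {m : ℕ} (μ : Fin (m + 1) → Measure ℝ) [∀ i, IsProbabilityMeasure (μ i)]
    (hI : ∀ i, Integrable id (μ i)) (c : ℝ) :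
    Integrable (fun x : Fin (m + 1) → ℝ =>
      max (Finset.univ.sup' Finset.univ_nonempty fun i => x i) c) (Measure.pi μ) := by
  refine Integrable.mono' (g := fun x => (∑ i, |x i|) + |c|) ?_
    (measurable_supc c).aestronglyMeasurable ?_
  · refine Integrable.add ?_ (integrable_const _)
    refine integrable_finset_sum _ fun i _ => ?_
    exact integrable_eval μ (measurable_id.abs) ((hI i).abs)
  · filter_upwards with x
    rw [Real.norm_eq_abs]
    calc |max (Finset.univ.sup' Finset.univ_nonempty fun i => x i) c|
        ≤ |Finset.univ.sup' Finset.univ_nonempty fun i => x i| + |c| := abs_max_le_add _ _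
      _ ≤ (∑ i, |x i|) + |c| := by
          gcongr
          exact abs_sup'_le _ _ _

lemma integrable_supc_prod {m : ℕ} (A : Measure ℝ) [IsProbabilityMeasure A]
    (hA : Integrable id A) (μ : Fin (m + 1) → Measure ℝ) [∀ i, IsProbabilityMeasure (μ i)]
    (hI : ∀ i, Integrable id (μ i)) (c : ℝ) :
    Integrable (fun p : ℝ × (Fin (m + 1) → ℝ) =>
      max p.1 (max (Finset.univ.sup' Finset.univ_nonempty fun i => p.2 i) c))
      (A.prod (Measure.pi μ)) := by
  have hmeas : Measurable (fun p : ℝ × (Fin (m + 1) → ℝ) =>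
      max p.1 (max (Finset.univ.sup' Finset.univ_nonempty fun i => p.2 i) c)) :=
    measurable_fst.max ((measurable_supc c).comp measurable_snd)
  refine Integrable.mono' (g := fun p => |p.1| + ((∑ i, |p.2 i|) + |c|)) ?_
    hmeas.aestronglyMeasurable ?_
  · have h1 : Integrable (fun p : ℝ × (Fin (m + 1) → ℝ) => |p.1|) (A.prod (Measure.pi μ)) := by
      have hmap : (A.prod (Measure.pi μ)).map Prod.fst = A := by
        simp [Measure.map_fst_prod]
      have : Integrable (fun t : ℝ => |t|) ((A.prod (Measure.pi μ)).map Prod.fst) := by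
        rw [hmap]; exact hA.abs
      exact (integrable_map_measure (measurable_id.abs).aestronglyMeasurable
        measurable_fst.aemeasurable).mp this
    have h2 : Integrable (fun p : ℝ × (Fin (m + 1) → ℝ) => (∑ i, |p.2 i|) + |c|)
        (A.prod (Measure.pi μ)) := by
      have hmap : (A.prod (Measure.pi μ)).map Prod.snd = Measure.pi μ := by
        simp [Measure.map_snd_prod]
      have hint : Integrable (fun y : Fin (m + 1) → ℝ => (∑ i, |y i|) + |c|) (Measure.pi μ) := by
        refine Integrable.add ?_ (integrable_const _)
        exact integrable_finset_sum _ fun i _ =>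
          integrable_eval μ (measurable_id.abs) ((hI i).abs)
      have hmeas' : Measurable (fun y : Fin (m + 1) → ℝ => (∑ i, |y i|) + |c|) := by
        exact (Finset.measurable_sum _ fun i _ => (measurable_pi_apply i).abs).add
          measurable_const
      have : Integrable (fun y : Fin (m + 1) → ℝ => (∑ i, |y i|) + |c|)
          ((A.prod (Measure.pi μ)).map Prod.snd) := by rw [hmap]; exact hint
      exact (integrable_map_measure hmeas'.aestronglyMeasurable
        measurable_snd.aemeasurable).mp this
    exact h1.add h2
  · filter_upwards with p
    rw [Real.norm_eq_abs]
    calc |max p.1 (max (Finset.univ.sup' Finset.univ_nonempty fun i => p.2 i) c)|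
        ≤ |p.1| + |max (Finset.univ.sup' Finset.univ_nonempty fun i => p.2 i) c| :=
          abs_max_le_add _ _
      _ ≤ |p.1| + ((∑ i, |p.2 i|) + |c|) := by
          gcongr
          calc |max (Finset.univ.sup' Finset.univ_nonempty fun i => p.2 i) c|
              ≤ |Finset.univ.sup' Finset.univ_nonempty fun i => p.2 i| + |c| := abs_max_le_add _ _
            _ ≤ (∑ i, |p.2 i|) + |c| := by gcongr; exact abs_sup'_le _ _ _

lemma sup'_univ_succ {m : ℕ} (f : Fin (m + 2) → ℝ) :
    Finset.univ.sup' Finset.univ_nonempty f =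
      max (f 0) (Finset.univ.sup' Finset.univ_nonempty fun j : Fin (m + 1) => f j.succ) := by
  refine le_antisymm (Finset.sup'_le _ _ fun i _ => ?_) (max_le ?_ ?_)
  · induction i using Fin.cases with
    | zero => exact le_max_left _ _
    | succ j =>
      exact (Finset.le_sup' (fun j : Fin (m + 1) => f j.succ) (Finset.mem_univ j)).trans
        (le_max_right _ _)
  · exact Finset.le_sup' f (Finset.mem_univ 0)
  · exact Finset.sup'_le _ _ fun j _ => Finset.le_sup' f (Finset.mem_univ j.succ)

/-- The key hybridization lemma, stated for product measures on `ℝ`. -/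
lemma core : ∀ (m : ℕ) (κ lam : Fin (m + 1) → Measure ℝ),
    (∀ i, IsProbabilityMeasure (κ i)) → (∀ i, IsProbabilityMeasure (lam i)) →
    (∀ i, Integrable id (κ i)) → (∀ i, Integrable id (lam i)) →
    (∀ i (c : ℝ), ∫ t, max t c ∂(lam i) ≤ ∫ t, max t c ∂(κ i)) →
    ∀ c : ℝ,
      ∫ x, max (Finset.univ.sup' Finset.univ_nonempty fun i => x i) c ∂(Measure.pi lam) ≤
      ∫ x, max (Finset.univ.sup' Finset.univ_nonempty fun i => x i) c ∂(Measure.pi κ) := by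
  intro m
  induction m with
  | zero =>
    intro κ lam hκp hlamp hκI hlamI h c
    haveI := hκp; haveI := hlamp
    have hsup : ∀ x : Fin 1 → ℝ,
        (Finset.univ.sup' Finset.univ_nonempty fun i => x i) = x 0 := by
      intro x
      simp [Finset.univ_unique]
    have heq : ∀ (ν : Fin 1 → Measure ℝ), (∀ i, IsProbabilityMeasure (ν i)) →
        ∫ x, max (Finset.univ.sup' Finset.univ_nonempty fun i => x i) c ∂(Measure.pi ν) =
        ∫ t, max t c ∂(ν 0) := by
      intro ν hν
      haveI := hν
      have hν' : ν = fun _ => ν 0 := funext fun i => congrArg ν (Subsingleton.elim i 0)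
      have MP := measurePreserving_funUnique (ν 0) (Fin 1)
      have := MP.integral_comp (MeasurableEquiv.measurableEmbedding _)
        (fun t : ℝ => max t c)
      calc ∫ x, max (Finset.univ.sup' Finset.univ_nonempty fun i => x i) c ∂(Measure.pi ν)
          = ∫ x : Fin 1 → ℝ, max (x 0) c ∂(Measure.pi fun _ => ν 0) := by
            rw [← hν']
            exact integral_congr_ae (Filter.Eventually.of_forall fun x =>
              congrArg (fun t => max t c) (hsup x))
        _ = ∫ t, max t c ∂(ν 0) := by
            rw [← this]
            rfl
    rw [heq κ hκp, heq lam hlamp]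
    exact h 0 c
  | succ m ih =>
    intro κ lam hκp hlamp hκI hlamI h c
    haveI := hκp; haveI := hlamp
    set κ' : Fin (m + 1) → Measure ℝ := fun j => κ j.succ with hkdef'
    set lam' : Fin (m + 1) → Measure ℝ := fun j => lam j.succ with hlamdef'
    haveI : ∀ i, IsProbabilityMeasure (κ' i) := fun i => hκp i.succ
    haveI : ∀ i, IsProbabilityMeasure (lam' i) := fun i => hlamp i.succ
    set S : (Fin (m + 1) → ℝ) → ℝ :=
      fun y => Finset.univ.sup' Finset.univ_nonempty fun i => y i with hS
    set G : ℝ × (Fin (m + 1) → ℝ) → ℝ := fun p => max p.1 (max (S p.2) c) with hG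
    -- transfer the integrals over `Measure.pi` to the product measures
    have transfer : ∀ (ν : Fin (m + 2) → Measure ℝ), (∀ i, IsProbabilityMeasure (ν i)) →
        ∫ x, max (Finset.univ.sup' Finset.univ_nonempty fun i => x i) c ∂(Measure.pi ν) =
        ∫ p, G p ∂((ν 0).prod (Measure.pi fun j => ν j.succ)) := by
      intro ν hν
      haveI := hν
      have hfam : (fun j : Fin (m + 1) => ν ((0 : Fin (m + 2)).succAbove j)) =
          fun j => ν j.succ := by
        funext j; rw [Fin.succAbove_zero]
      have MP := (measurePreserving_piFinSuccAbove ν 0).symm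
      rw [hfam] at MP
      have hint := MP.integral_comp (MeasurableEquiv.measurableEmbedding _)
        (fun x : Fin (m + 2) → ℝ => max (Finset.univ.sup' Finset.univ_nonempty fun i => x i) c)
      rw [← hint]
      refine integral_congr_ae (Filter.Eventually.of_forall ?_)
      rintro ⟨a, y⟩
      set z : Fin (m + 2) → ℝ :=
        (MeasurableEquiv.piFinSuccAbove (fun _ : Fin (m + 2) => ℝ) 0).symm (a, y) with hzdef
      show max (Finset.univ.sup' Finset.univ_nonempty fun i => z i) c = G (a, y)
      have hz : z = Fin.cons a y := by
        rw [hzdef]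
        simp [MeasurableEquiv.piFinSuccAbove_symm_apply, Fin.insertNthEquiv, Fin.insertNth_zero']
      rw [hz]
      rw [sup'_univ_succ]
      simp only [Fin.cons_zero, Fin.cons_succ]
      rw [max_assoc]
    rw [transfer κ hκp, transfer lam hlamp]
    -- integrabilities
    have hκI' : ∀ i, Integrable id (κ' i) := fun i => hκI i.succ
    have hlamI' : ∀ i, Integrable id (lam' i) := fun i => hlamI i.succ
    have hint1 : Integrable G ((lam 0).prod (Measure.pi lam')) :=
      integrable_supc_prod (lam 0) (hlamI 0) lam' hlamI' c
    have hint2 : Integrable G ((lam 0).prod (Measure.pi κ')) :=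
      integrable_supc_prod (lam 0) (hlamI 0) κ' hκI' c
    have hint3 : Integrable G ((κ 0).prod (Measure.pi κ')) :=
      integrable_supc_prod (κ 0) (hκI 0) κ' hκI' c
    have step1 : ∫ p, G p ∂((lam 0).prod (Measure.pi lam')) ≤
        ∫ p, G p ∂((lam 0).prod (Measure.pi κ')) := by
      rw [integral_prod _ hint1, integral_prod _ hint2]
      refine integral_mono hint1.integral_prod_left hint2.integral_prod_left fun a => ?_
      have hcomm : ∀ y : Fin (m + 1) → ℝ, G (a, y) = max (S y) (max a c) := by
        intro y
        simp only [hG]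
        rw [max_left_comm]
      simp only [hcomm]
      exact ih κ' lam' (fun i => hκp i.succ) (fun i => hlamp i.succ) hκI' hlamI'
        (fun i c' => h i.succ c') (max a c)
    have step2 : ∫ p, G p ∂((lam 0).prod (Measure.pi κ')) ≤
        ∫ p, G p ∂((κ 0).prod (Measure.pi κ')) := by
      rw [integral_prod_symm _ hint2, integral_prod_symm _ hint3]
      refine integral_mono hint2.integral_prod_right hint3.integral_prod_right fun y => ?_
      exact h 0 (max (S y) c)
    exact step1.trans step2

/-- joint law of independent random variables is the product of the marginals. -/
lemma joint_law {Ω : Type*} [MeasurableSpace Ω] (P : Measure Ω) [IsProbabilityMeasure P]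
    {m : ℕ} (W : Fin (m + 1) → Ω → ℝ) (hmeas : ∀ i, Measurable (W i))
    (hindep : iIndepFun W P) :
    P.map (fun ω i => W i ω) = Measure.pi (fun i => P.map (W i)) := by
  haveI : ∀ i, IsProbabilityMeasure (P.map (W i)) := fun i =>
    Measure.isProbabilityMeasure_map (hmeas i).aemeasurable
  refine (Measure.pi_eq (μ := fun i => P.map (W i)) fun s hs => ?_).symm
  rw [Measure.map_apply (measurable_pi_lambda _ hmeas) (MeasurableSet.univ_pi hs)]
  have hpre : (fun ω i => W i ω) ⁻¹' Set.pi Set.univ s = ⋂ i ∈ Finset.univ, W i ⁻¹' s i := by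
    ext ω
    simp [Set.mem_pi]
  rw [hpre, hindep.measure_inter_preimage_eq_mul Finset.univ (fun i _ => hs i)]
  exact Finset.prod_congr rfl fun i _ =>
    (Measure.map_apply (hmeas i) (hs i)).symm

end SOMaxAux

open SOMaxAux Finset Filter

theorem stochasticallyOptimistic_max {Ω : Type*} [MeasurableSpace Ω]
    (P : Measure Ω) [IsProbabilityMeasure P] (n : ℕ)
    (X Y : Fin (n + 1) → Ω → ℝ)
    (hXmeas : ∀ i, Measurable (X i)) (hYmeas : ∀ i, Measurable (Y i))
    (hXindep : iIndepFun X P)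
    (hYindep : iIndepFun Y P)
    (hSO : ∀ i, StochasticallyOptimistic P P (X i) (Y i)) :
    StochasticallyOptimistic P P
      (fun ω => Finset.univ.sup' Finset.univ_nonempty fun i => X i ω)
      (fun ω => Finset.univ.sup' Finset.univ_nonempty fun i => Y i ω) := by
  intro u hconv hmono hIX hIY
  set MX : Ω → ℝ := fun ω => Finset.univ.sup' Finset.univ_nonempty fun i => X i ω with hMX
  set MY : Ω → ℝ := fun ω => Finset.univ.sup' Finset.univ_nonempty fun i => Y i ω with hMY
  have hMXmeas : Measurable MX := measurable_sup'_lambda _ hXmeas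
  have hMYmeas : Measurable MY := measurable_sup'_lambda _ hYmeas
  -- Key: for every truncation level c, the truncated inequality holds
  have key : ∀ c : ℝ, ∫ ω, max (u (MY ω)) c ∂P ≤ ∫ ω, max (u (MX ω)) c ∂P := by
    intro c
    set v : ℝ → ℝ := fun t => max (u t) c with hv
    have hv_mono : Monotone v := fun a b hab => max_le_max (hmono hab) le_rfl
    have hv_meas : Measurable v := hv_mono.measurable
    set W : Fin (n + 1) → Ω → ℝ := fun i ω => v (X i ω) with hW
    set V : Fin (n + 1) → Ω → ℝ := fun i ω => v (Y i ω) with hV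
    have hWmeas : ∀ i, Measurable (W i) := fun i => hv_meas.comp (hXmeas i)
    have hVmeas : ∀ i, Measurable (V i) := fun i => hv_meas.comp (hYmeas i)
    -- integrability of v ∘ MX, v ∘ MY
    have hvMX : Integrable (fun ω => v (MX ω)) P := by
      refine Integrable.mono' (g := fun ω => |u (MX ω)| + |c|)
        (hIX.abs.add (integrable_const _))
        ((hv_meas.comp hMXmeas).aestronglyMeasurable) ?_
      filter_upwards with ω
      rw [Real.norm_eq_abs]
      exact abs_max_le_add _ _
    have hvMY : Integrable (fun ω => v (MY ω)) P := by
      refine Integrable.mono' (g := fun ω => |u (MY ω)| + |c|)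
        (hIY.abs.add (integrable_const _))
        ((hv_meas.comp hMYmeas).aestronglyMeasurable) ?_
      filter_upwards with ω
      rw [Real.norm_eq_abs]
      exact abs_max_le_add _ _
    -- the coordinates are dominated
    have hXle : ∀ i ω, X i ω ≤ MX ω := fun i ω =>
      Finset.le_sup' (fun j => X j ω) (Finset.mem_univ i)
    have hYle : ∀ i ω, Y i ω ≤ MY ω := fun i ω =>
      Finset.le_sup' (fun j => Y j ω) (Finset.mem_univ i)
    have hWint : ∀ i, Integrable (W i) P := by
      intro i
      refine Integrable.mono' (g := fun ω => |v (MX ω)| + |c|)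
        (hvMX.abs.add (integrable_const _)) ((hWmeas i).aestronglyMeasurable) ?_
      filter_upwards with ω
      rw [Real.norm_eq_abs, abs_le]
      constructor
      · have : -|c| ≤ c := neg_abs_le c
        have h2 : c ≤ W i ω := le_max_right _ _
        nlinarith [abs_nonneg (v (MX ω))]
      · have h1 : W i ω ≤ v (MX ω) := hv_mono (hXle i ω)
        have h2 : v (MX ω) ≤ |v (MX ω)| := le_abs_self _
        nlinarith [abs_nonneg c]
    have hVint : ∀ i, Integrable (V i) P := by
      intro i
      refine Integrable.mono' (g := fun ω => |v (MY ω)| + |c|)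
        (hvMY.abs.add (integrable_const _)) ((hVmeas i).aestronglyMeasurable) ?_
      filter_upwards with ω
      rw [Real.norm_eq_abs, abs_le]
      constructor
      · have : -|c| ≤ c := neg_abs_le c
        have h2 : c ≤ V i ω := le_max_right _ _
        nlinarith [abs_nonneg (v (MY ω))]
      · have h1 : V i ω ≤ v (MY ω) := hv_mono (hYle i ω)
        have h2 : v (MY ω) ≤ |v (MY ω)| := le_abs_self _
        nlinarith [abs_nonneg c]
    -- laws
    set κ : Fin (n + 1) → Measure ℝ := fun i => P.map (W i) with hkdef
    set lam : Fin (n + 1) → Measure ℝ := fun i => P.map (V i) with hlamdef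
    have hkprob : ∀ i, IsProbabilityMeasure (κ i) := fun i =>
      Measure.isProbabilityMeasure_map (hWmeas i).aemeasurable
    have hlamprob : ∀ i, IsProbabilityMeasure (lam i) := fun i =>
      Measure.isProbabilityMeasure_map (hVmeas i).aemeasurable
    haveI := hkprob
    haveI := hlamprob
    have hκI : ∀ i, Integrable id (κ i) := fun i =>
      (integrable_map_measure aestronglyMeasurable_id (hWmeas i).aemeasurable).mpr (hWint i)
    have hlamI : ∀ i, Integrable id (lam i) := fun i =>
      (integrable_map_measure aestronglyMeasurable_id (hVmeas i).aemeasurable).mpr (hVint i)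
    -- single-coordinate comparison
    have hcomp : ∀ i (c' : ℝ), ∫ t, max t c' ∂(lam i) ≤ ∫ t, max t c' ∂(κ i) := by
      intro i c'
      have hmc : Measurable fun t : ℝ => max t c' := measurable_id.max measurable_const
      rw [integral_map (hVmeas i).aemeasurable hmc.aestronglyMeasurable,
        integral_map (hWmeas i).aemeasurable hmc.aestronglyMeasurable]
      -- this is E[max(v(Y i), c')] ≤ E[max(v(X i), c')], i.e. hSO with u' = max (u ·) (max c c')
      set w : ℝ → ℝ := fun t => max (u t) (max c c') with hw
      have hweq : ∀ t, max (v t) c' = w t := fun t => max_assoc _ _ _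
      have hwconv : ConvexOn ℝ Set.univ w := by
        have := hconv.sup (convexOn_const (max c c') convex_univ)
        exact this
      have hwmono : Monotone w := fun a b hab => max_le_max (hmono hab) le_rfl
      have hwX : Integrable (fun ω => w (X i ω)) P := by
        have : (fun ω => w (X i ω)) = fun ω => max (W i ω) c' := by
          funext ω; rw [← hweq]
        rw [this]
        refine Integrable.mono' (g := fun ω => |W i ω| + |c'|)
          ((hWint i).abs.add (integrable_const _))
          (((hWmeas i).max measurable_const).aestronglyMeasurable) ?_
        filter_upwards with ω
        rw [Real.norm_eq_abs]
        exact abs_max_le_add _ _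
      have hwY : Integrable (fun ω => w (Y i ω)) P := by
        have : (fun ω => w (Y i ω)) = fun ω => max (V i ω) c' := by
          funext ω; rw [← hweq]
        rw [this]
        refine Integrable.mono' (g := fun ω => |V i ω| + |c'|)
          ((hVint i).abs.add (integrable_const _))
          (((hVmeas i).max measurable_const).aestronglyMeasurable) ?_
        filter_upwards with ω
        rw [Real.norm_eq_abs]
        exact abs_max_le_add _ _
      have := hSO i w hwconv hwmono hwX hwY
      calc ∫ ω, max (V i ω) c' ∂P = ∫ ω, w (Y i ω) ∂P :=
            integral_congr_ae (Filter.Eventually.of_forall fun ω => hweq _)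
        _ ≤ ∫ ω, w (X i ω) ∂P := this
        _ = ∫ ω, max (W i ω) c' ∂P :=
            integral_congr_ae (Filter.Eventually.of_forall fun ω => (hweq _).symm)
    -- independence of the transformed variables
    have hWindep : iIndepFun W P := by
      have := hXindep.comp (fun _ => v) (fun _ => hv_meas)
      exact this
    have hVindep : iIndepFun V P := by
      have := hYindep.comp (fun _ => v) (fun _ => hv_meas)
      exact this
    -- transfer expectations to the product laws
    have hWJ : Measurable (fun ω i => W i ω) := measurable_pi_lambda _ hWmeas
    have hVJ : Measurable (fun ω i => V i ω) := measurable_pi_lambda _ hVmeas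
    have hvsup : ∀ ω, v (MX ω) =
        max (Finset.univ.sup' Finset.univ_nonempty fun i => W i ω) c := by
      intro ω
      have h1 : v (MX ω) = Finset.univ.sup' Finset.univ_nonempty fun i => W i ω := by
        rw [hMX]
        exact Finset.comp_sup'_eq_sup'_comp _ v fun a b => hv_mono.map_sup a b
      rw [h1, max_eq_left]
      have : c ≤ W 0 ω := le_max_right _ _
      exact this.trans (Finset.le_sup' (fun i => W i ω) (Finset.mem_univ 0))
    have hvsupY : ∀ ω, v (MY ω) =
        max (Finset.univ.sup' Finset.univ_nonempty fun i => V i ω) c := by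
      intro ω
      have h1 : v (MY ω) = Finset.univ.sup' Finset.univ_nonempty fun i => V i ω := by
        rw [hMY]
        exact Finset.comp_sup'_eq_sup'_comp _ v fun a b => hv_mono.map_sup a b
      rw [h1, max_eq_left]
      have : c ≤ V 0 ω := le_max_right _ _
      exact this.trans (Finset.le_sup' (fun i => V i ω) (Finset.mem_univ 0))
    have htransX : ∫ ω, v (MX ω) ∂P =
        ∫ x, max (Finset.univ.sup' Finset.univ_nonempty fun i => x i) c ∂(Measure.pi κ) := by
      rw [← joint_law P W hWmeas hWindep]
      rw [integral_map hWJ.aemeasurable (measurable_supc c).aestronglyMeasurable]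
      exact integral_congr_ae (Filter.Eventually.of_forall fun ω => hvsup ω)
    have htransY : ∫ ω, v (MY ω) ∂P =
        ∫ x, max (Finset.univ.sup' Finset.univ_nonempty fun i => x i) c ∂(Measure.pi lam) := by
      rw [← joint_law P V hVmeas hVindep]
      rw [integral_map hVJ.aemeasurable (measurable_supc c).aestronglyMeasurable]
      exact integral_congr_ae (Filter.Eventually.of_forall fun ω => hvsupY ω)
    calc ∫ ω, max (u (MY ω)) c ∂P = ∫ ω, v (MY ω) ∂P := rfl
      _ = ∫ x, max (Finset.univ.sup' Finset.univ_nonempty fun i => x i) c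
            ∂(Measure.pi lam) := htransY
      _ ≤ ∫ x, max (Finset.univ.sup' Finset.univ_nonempty fun i => x i) c
            ∂(Measure.pi κ) := core n κ lam hkprob hlamprob
              hκI hlamI hcomp c
      _ = ∫ ω, v (MX ω) ∂P := htransX.symm
      _ = ∫ ω, max (u (MX ω)) c ∂P := rfl
  -- now let c → -∞ along c = -k
  have habs : ∀ (a : ℝ) (k : ℕ), |max a (-(k : ℝ))| ≤ |a| := by
    intro a k
    rcases le_total (-(k : ℝ)) a with hka | hka
    · rw [max_eq_left hka]
    · rw [max_eq_right hka, abs_le]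
      have hk0 : (0 : ℝ) ≤ (k : ℝ) := Nat.cast_nonneg k
      have ha0 : a ≤ 0 := hka.trans (by linarith)
      rw [abs_of_nonpos ha0]
      constructor <;> linarith
  have hlim : ∀ (g : Ω → ℝ), Measurable g → (hg : Integrable (fun ω => u (g ω)) P) →
      Tendsto (fun k : ℕ => ∫ ω, max (u (g ω)) (-(k : ℝ)) ∂P) atTop
        (nhds (∫ ω, u (g ω) ∂P)) := by
    intro g hg hgint
    refine tendsto_integral_of_dominated_convergence (fun ω => |u (g ω)|)
      (fun k => ((hmono.measurable.comp hg).max measurable_const).aestronglyMeasurable)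
      hgint.abs (fun k => Filter.Eventually.of_forall fun ω => ?_)
      (Filter.Eventually.of_forall fun ω => ?_)
    · rw [Real.norm_eq_abs]
      exact habs _ _
    · refine Filter.Tendsto.congr' ?_ tendsto_const_nhds
      filter_upwards [Filter.eventually_ge_atTop ⌈-(u (g ω))⌉₊] with k hk
      have h1 : -(u (g ω)) ≤ (k : ℝ) := (Nat.le_ceil _).trans (Nat.cast_le.mpr hk)
      rw [max_eq_left (by linarith)]
  exact le_of_tendsto_of_tendsto' (hlim MY hMYmeas hIY) (hlim MX hMXmeas hIX)
    fun k => key (-(k : ℝ))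
end
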